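/- After multiplying by (z)_k, the identity ∑_{j=0}^{k} (-k)_j (k+y)_j / (j! (z)_j) · (z)_k = (z−y−k)_k holds as an identity of polynomials in the variable z, for all nonnegative integers k and y. Here (z)_k / (z)_j = (z+j)(z+j+1)···(z+k−1) is a polynomial in z for j ≤ k. -/

import Mathlib

open Finset Polynomial

private lemma asc_succ_left_eval (n : ℕ) (t : ℚ) :
    (ascPochhammer ℚ (n + 1)).eval t = t * (ascPochhammer ℚ n).eval (t + 1) := by
  rw [ascPochhammer_succ_left, eval_mul, eval_X, eval_comp, eval_add, eval_X, eval_one]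

private lemma gauss_key (k : ℕ) (c : ℚ) : ∀ z : ℚ,
    ∑ j ∈ Finset.range (k + 1), (-1 : ℚ) ^ j * (k.choose j : ℚ) *
        (ascPochhammer ℚ j).eval c * (ascPochhammer ℚ (k - j)).eval (z + j)
      = (ascPochhammer ℚ k).eval (z - c) := by
  induction k with
  | zero => intro z; simp
  | succ k ih =>
    intro z
    have rhs : (ascPochhammer ℚ (k + 1)).eval (z - c)
        = (z - c) * (ascPochhammer ℚ k).eval ((z + 1) - c) := by
      rw [asc_succ_left_eval]
      ring_nf
    rw [rhs, ← ih (z + 1), Finset.mul_sum]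
    -- per-term expansion on the RHS
    have hterm : ∀ j ∈ Finset.range (k + 1),
        (z - c) * ((-1 : ℚ) ^ j * (k.choose j : ℚ) *
            (ascPochhammer ℚ j).eval c * (ascPochhammer ℚ (k - j)).eval (z + 1 + j))
        = ((-1 : ℚ) ^ j * (k.choose j : ℚ) *
            (ascPochhammer ℚ j).eval c * (ascPochhammer ℚ (k + 1 - j)).eval (z + j))
          + ((-1 : ℚ) ^ (j + 1) * (k.choose j : ℚ) *
            (ascPochhammer ℚ (j + 1)).eval c *
              (ascPochhammer ℚ (k + 1 - (j + 1))).eval (z + (j + 1 : ℕ))) := by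
      intro j hj
      rw [Finset.mem_range] at hj
      have hj' : j ≤ k := Nat.lt_succ_iff.mp hj
      have h1 : k + 1 - j = (k - j) + 1 := by omega
      have h2 : k + 1 - (j + 1) = k - j := by omega
      rw [h1, h2, asc_succ_left_eval, ascPochhammer_succ_eval]
      push_cast
      ring_nf
    have hshift : ∑ j ∈ Finset.range (k + 1),
        ((-1 : ℚ) ^ (j + 1) * (k.choose j : ℚ) *
            (ascPochhammer ℚ (j + 1)).eval c *
              (ascPochhammer ℚ (k + 1 - (j + 1))).eval (z + (j + 1 : ℕ)))
        = (∑ j ∈ Finset.range (k + 2),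
            ((-1 : ℚ) ^ j * (k.choose (j - 1) : ℚ) *
              (ascPochhammer ℚ j).eval c *
                (ascPochhammer ℚ (k + 1 - j)).eval (z + j)))
          - (ascPochhammer ℚ (k + 1)).eval z := by
      rw [Finset.sum_range_succ'
        (fun j => (-1 : ℚ) ^ j * (k.choose (j - 1) : ℚ) *
          (ascPochhammer ℚ j).eval c * (ascPochhammer ℚ (k + 1 - j)).eval (z + j)) (k + 1)]
      simp
    rw [Finset.sum_congr rfl hterm, Finset.sum_add_distrib, hshift]
    -- first sum: extend to range (k+2)
    have hext : ∑ j ∈ Finset.range (k + 2),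
        ((-1 : ℚ) ^ j * (k.choose j : ℚ) *
            (ascPochhammer ℚ j).eval c * (ascPochhammer ℚ (k + 1 - j)).eval (z + j))
        = ∑ j ∈ Finset.range (k + 1),
            ((-1 : ℚ) ^ j * (k.choose j : ℚ) *
              (ascPochhammer ℚ j).eval c * (ascPochhammer ℚ (k + 1 - j)).eval (z + j)) := by
      conv_lhs => rw [Finset.sum_range_succ]
      simp [Nat.choose_succ_self]
    rw [← hext]
    -- LHS: apply Pascal termwise
    have hpascal : ∀ j ∈ Finset.range (k + 2),
        ((-1 : ℚ) ^ j * ((k + 1).choose j : ℚ) *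
            (ascPochhammer ℚ j).eval c * (ascPochhammer ℚ (k + 1 - j)).eval (z + j))
        = ((-1 : ℚ) ^ j * (k.choose j : ℚ) *
            (ascPochhammer ℚ j).eval c * (ascPochhammer ℚ (k + 1 - j)).eval (z + j))
          + ((-1 : ℚ) ^ j * (k.choose (j - 1) : ℚ) *
            (ascPochhammer ℚ j).eval c * (ascPochhammer ℚ (k + 1 - j)).eval (z + j))
          - (if j = 0 then (ascPochhammer ℚ (k + 1)).eval z else 0) := by
      intro j _
      match j with
      | 0 => simp
      | i + 1 =>
        have : ((k + 1).choose (i + 1) : ℚ) = (k.choose (i + 1) : ℚ) + (k.choose i : ℚ) := by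
          rw [Nat.choose_succ_succ]; push_cast; ring
        simp only [Nat.add_sub_cancel, this, if_neg (Nat.succ_ne_zero i)]
        ring
    rw [show k + 1 + 1 = k + 2 from rfl, Finset.sum_congr rfl hpascal,
      Finset.sum_sub_distrib, Finset.sum_add_distrib, Finset.sum_ite_eq'
      (Finset.range (k + 2)) 0 (fun _ => (ascPochhammer ℚ (k + 1)).eval z)]
    simp
    ring

private lemma coeff_eq (k : ℕ) : ∀ j : ℕ, j ≤ k →
    (ascPochhammer ℚ j).eval (-(k : ℚ)) = (-1) ^ j * (k.choose j : ℚ) * (j.factorial : ℚ) := by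
  intro j
  induction j with
  | zero => simp
  | succ j ih =>
    intro hj
    have hj' : j ≤ k := Nat.le_of_succ_le hj
    rw [ascPochhammer_succ_eval, ih hj']
    have hc : (k.choose (j + 1) : ℚ) * ((j : ℚ) + 1) = (k.choose j : ℚ) * ((k : ℚ) - (j : ℚ)) := by
      have := Nat.choose_succ_right_eq k j
      have hkj : ((k - j : ℕ) : ℚ) = (k : ℚ) - (j : ℚ) := by
        push_cast [Nat.cast_sub hj']; ring
      calc (k.choose (j + 1) : ℚ) * ((j : ℚ) + 1)
          = ((k.choose (j + 1) * (j + 1) : ℕ) : ℚ) := by push_cast; ring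
        _ = ((k.choose j * (k - j) : ℕ) : ℚ) := by rw [this]
        _ = (k.choose j : ℚ) * ((k : ℚ) - (j : ℚ)) := by push_cast [Nat.cast_sub hj']; ring
    have hfac : ((j + 1).factorial : ℚ) = ((j : ℚ) + 1) * (j.factorial : ℚ) := by
      rw [Nat.factorial_succ]; push_cast; ring
    rw [hfac]
    have : (-1 : ℚ) ^ (j + 1) * (k.choose (j + 1) : ℚ) * (((j : ℚ) + 1) * (j.factorial : ℚ))
        = (-1 : ℚ) ^ j * (j.factorial : ℚ) * (-((k.choose (j + 1) : ℚ) * ((j : ℚ) + 1))) := by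
      ring
    rw [this, hc]
    ring

/-- The Gauss identity multiplied through by `(z)_k`, as a polynomial identity in `z`:
`∑_{j=0}^{k} ((-k)_j (k+y)_j / j!) · (z+j)_{k−j} = (z−y−k)_k`. -/
theorem gauss_2F1_poly (k y : ℕ) :
    ∑ j ∈ Finset.range (k + 1),
        Polynomial.C (((ascPochhammer ℚ j).eval (-(k : ℚ)) *
            (ascPochhammer ℚ j).eval ((k : ℚ) + (y : ℚ))) / (j.factorial : ℚ)) *
          ((ascPochhammer ℚ (k - j)).comp (Polynomial.X + Polynomial.C (j : ℚ))) =
      (ascPochhammer ℚ k).comp (Polynomial.X - Polynomial.C ((y : ℚ) + (k : ℚ))) := by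
  apply Polynomial.funext
  intro z
  rw [eval_finset_sum]
  have hterm : ∀ j ∈ Finset.range (k + 1),
      (Polynomial.C (((ascPochhammer ℚ j).eval (-(k : ℚ)) *
            (ascPochhammer ℚ j).eval ((k : ℚ) + (y : ℚ))) / (j.factorial : ℚ)) *
          ((ascPochhammer ℚ (k - j)).comp (Polynomial.X + Polynomial.C (j : ℚ)))).eval z
      = (-1 : ℚ) ^ j * (k.choose j : ℚ) *
          (ascPochhammer ℚ j).eval ((k : ℚ) + (y : ℚ)) *
          (ascPochhammer ℚ (k - j)).eval (z + j) := by
    intro j hj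
    rw [Finset.mem_range] at hj
    rw [eval_mul, eval_C, eval_comp, eval_add, eval_X, eval_C,
      coeff_eq k j (Nat.lt_succ_iff.mp hj)]
    have hfac : (j.factorial : ℚ) ≠ 0 := Nat.cast_ne_zero.mpr (Nat.factorial_ne_zero j)
    field_simp
  rw [Finset.sum_congr rfl hterm, gauss_key k ((k : ℚ) + (y : ℚ)) z, eval_comp, eval_sub,
    eval_X, eval_C]
  ring_nf
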